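/- arXiv:2108.05904 — 3 statements merged into one kernel-verified Lean document; each statement's English description precedes it below -/
import Mathlib

section
/- Let H_A, H_B be finite-dimensional Hilbert spaces and T : B(H_A ⊗ H_B) → B(H_A ⊗ H_B) a positive linear map. Then T(1 ⊗ b) = 1 ⊗ b for all b ∈ B(H_B) if and only if there exists a unital positive linear map S : B(H_A) → B(H_A) such that T(a ⊗ b) = S(a) ⊗ b for all a ∈ B(H_A), b ∈ B(H_B). -/
open Matrix Kronecker ComplexOrder

section Helpers

variable {ι : Type*} [Fintype ι] [DecidableEq ι]

/-- A complex matrix with vanishing quadratic form is zero. -/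
lemma quad_zero (L : Matrix ι ι ℂ)
    (h : ∀ v : ι → ℂ, dotProduct (star v) (L *ᵥ v) = 0) : L = 0 := by
  have hzero : Matrix.toEuclideanLin L = 0 := by
    rw [← inner_map_self_eq_zero]
    intro x
    have h1 : (inner ℂ x (Matrix.toEuclideanLin L x) : ℂ) = 0 := by
      rw [EuclideanSpace.inner_eq_star_dotProduct, dotProduct_comm]
      simpa [Matrix.ofLp_toEuclideanLin_apply] using h (WithLp.ofLp x)
    rw [← inner_conj_symm, h1, map_zero]
  exact (LinearEquiv.map_eq_zero_iff _).mp hzero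

omit [DecidableEq ι] in
lemma psd_sum {κ : Type*} (s : Finset κ) (f : κ → Matrix ι ι ℂ)
    (hf : ∀ i ∈ s, (f i).PosSemidef) : (∑ i ∈ s, f i).PosSemidef := by
  classical
  induction s using Finset.induction_on with
  | empty => simpa using Matrix.PosSemidef.zero
  | insert _ _ hnotmem ih =>
    rw [Finset.sum_insert hnotmem]
    exact ((hf _ (Finset.mem_insert_self _ _)).add
      (ih fun i hi => hf i (Finset.mem_insert_of_mem hi)))

lemma diag_sum (d : ι → ℂ) :
    Matrix.diagonal d = ∑ i, d i • Matrix.single i i (1:ℂ) := by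
  ext a b
  rw [Matrix.sum_apply]
  by_cases hab : a = b
  · subst hab
    rw [Finset.sum_eq_single a (fun x _ hxa => by
      simp [Matrix.single, Matrix.smul_apply, hxa]) (by simp)]
    simp [Matrix.single, Matrix.diagonal_apply]
  · rw [Finset.sum_eq_zero (fun x _ => by
      have : ¬(x = a ∧ x = b) := by rintro ⟨rfl, rfl⟩; exact hab rfl
      simp only [Matrix.smul_apply, Matrix.single, Matrix.of_apply, if_neg this,
        smul_zero])]
    simp [Matrix.diagonal_apply, hab]

lemma sum_std_one : (∑ i, Matrix.single i i (1:ℂ)) = (1 : Matrix ι ι ℂ) := by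
  have := diag_sum (fun _ : ι => (1:ℂ))
  simpa using this.symm

/-- Spectral decomposition packaged as a sum of positive semidefinite matrices. -/
lemma spectral_package {h : Matrix ι ι ℂ} (hh : h.IsHermitian) :
    ∃ (lam : ι → ℝ) (p : ι → Matrix ι ι ℂ),
      (∀ i, (p i).PosSemidef) ∧ (∑ i, p i = 1) ∧
      (h = ∑ i, (lam i : ℂ) • p i) ∧ (h * h = ∑ i, ((lam i : ℂ) ^ 2) • p i) := by
  classical
  set U : Matrix ι ι ℂ := (hh.eigenvectorUnitary : Matrix ι ι ℂ) with hU
  set D : Matrix ι ι ℂ := Matrix.diagonal (RCLike.ofReal ∘ hh.eigenvalues) with hD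
  have hUU : U * Uᴴ = 1 := by
    have := Matrix.mem_unitaryGroup_iff.mp hh.eigenvectorUnitary.2
    rwa [Matrix.star_eq_conjTranspose] at this
  have hUU' : Uᴴ * U = 1 := by
    have := Matrix.mem_unitaryGroup_iff'.mp hh.eigenvectorUnitary.2
    rwa [Matrix.star_eq_conjTranspose] at this
  have hsp : h = U * D * Uᴴ := by
    have := hh.spectral_theorem
    rwa [Unitary.conjStarAlgAut_apply, Matrix.star_eq_conjTranspose] at this
  have hEherm : ∀ i : ι, (Matrix.single i i (1:ℂ))ᴴ = Matrix.single i i 1 := by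
    intro i; ext a b; simp [Matrix.single, Matrix.conjTranspose_apply, and_comm]
  have hkey : ∀ c : ι → ℂ, U * Matrix.diagonal c * Uᴴ
      = ∑ i, c i • (U * Matrix.single i i 1 * Uᴴ) := by
    intro c
    rw [diag_sum c, Finset.mul_sum, Finset.sum_mul]
    refine Finset.sum_congr rfl fun i _ => ?_
    rw [Matrix.mul_smul, Matrix.smul_mul]
  refine ⟨hh.eigenvalues, fun i => U * Matrix.single i i 1 * Uᴴ, ?_, ?_, ?_, ?_⟩
  · intro i
    show (U * Matrix.single i i 1 * Uᴴ).PosSemidef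
    have hE : (Matrix.single i i (1:ℂ) * Uᴴ)ᴴ * (Matrix.single i i 1 * Uᴴ)
        = U * Matrix.single i i 1 * Uᴴ := by
      rw [Matrix.conjTranspose_mul, hEherm i, Matrix.conjTranspose_conjTranspose, mul_assoc,
        ← mul_assoc (Matrix.single i i (1:ℂ)), Matrix.single_mul_single_same, one_mul,
        ← mul_assoc]
    rw [← hE]
    exact Matrix.posSemidef_conjTranspose_mul_self _
  · have : (∑ i, U * Matrix.single i i (1:ℂ) * Uᴴ)
        = U * (∑ i, Matrix.single i i (1:ℂ)) * Uᴴ := by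
      rw [Finset.mul_sum, Finset.sum_mul]
    rw [this, sum_std_one, mul_one, hUU]
  · show h = ∑ i, ((hh.eigenvalues i : ℂ)) • (U * Matrix.single i i 1 * Uᴴ)
    exact hsp.trans (by rw [hD]; exact hkey _)
  · show h * h = ∑ i, (((hh.eigenvalues i : ℂ)) ^ 2) • (U * Matrix.single i i 1 * Uᴴ)
    have hhh : h * h = U * (D * D) * Uᴴ := by
      calc h * h = (U * D * Uᴴ) * (U * D * Uᴴ) := by rw [← hsp]
        _ = U * D * ((Uᴴ * U) * (D * Uᴴ)) := by simp only [mul_assoc]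
        _ = U * D * (D * Uᴴ) := by rw [hUU', one_mul]
        _ = U * (D * D) * Uᴴ := by simp only [mul_assoc]
    refine hhh.trans ?_
    rw [hD, Matrix.diagonal_mul_diagonal]
    have := hkey (fun i => ((hh.eigenvalues i : ℂ) ^ 2))
    simpa [sq, Function.comp] using this

end Helpers

section KS

variable {ι : Type*} [Fintype ι] [DecidableEq ι]
variable (T : Matrix ι ι ℂ →ₗ[ℂ] Matrix ι ι ℂ)
variable (hTpos : ∀ x : Matrix ι ι ℂ, x.PosSemidef → (T x).PosSemidef)

include hTpos in
lemma herm_map {h : Matrix ι ι ℂ} (hh : h.IsHermitian) : (T h).IsHermitian := by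
  obtain ⟨lam, p, hp, -, hsum, -⟩ := spectral_package hh
  have : T h = ∑ i, (lam i : ℂ) • T (p i) := by
    rw [hsum, map_sum]; simp only [_root_.map_smul]
  rw [Matrix.IsHermitian, this, Matrix.conjTranspose_sum]
  refine Finset.sum_congr rfl fun i _ => ?_
  rw [Matrix.conjTranspose_smul, (hTpos _ (hp i)).1, Complex.star_def, Complex.conj_ofReal]

include hTpos in
lemma ks (hT1 : T 1 = 1) {h : Matrix ι ι ℂ} (hh : h.IsHermitian) :
    (T (h * h) - T h * T h).PosSemidef := by
  obtain ⟨lam, p, hp, hone, hsum, hsq⟩ := spectral_package hh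
  set B := T h with hB
  have hBh : Bᴴ = B := (herm_map T hTpos hh)
  have hq1 : (∑ i, T (p i)) = 1 := by rw [← map_sum, hone, hT1]
  have hqB : (∑ i, (lam i : ℂ) • T (p i)) = B := by
    rw [hB, hsum, map_sum]; simp only [_root_.map_smul]
  have hqsq : (∑ i, ((lam i : ℂ) ^ 2) • T (p i)) = T (h * h) := by
    rw [hsq, map_sum]; simp only [_root_.map_smul]
  have hkey : T (h * h) - B * B =
      ∑ i, ((lam i : ℂ) • 1 - B) * T (p i) * ((lam i : ℂ) • 1 - B)ᴴ := by
    have hterm : ∀ i, ((lam i : ℂ) • 1 - B) * T (p i) * ((lam i : ℂ) • 1 - B)ᴴ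
        = ((lam i : ℂ) ^ 2) • T (p i) - ((lam i : ℂ) • T (p i)) * B
          - B * ((lam i : ℂ) • T (p i)) + B * T (p i) * B := by
      intro i
      have hCh : ((lam i : ℂ) • 1 - B)ᴴ = (lam i : ℂ) • 1 - B := by
        rw [Matrix.conjTranspose_sub, Matrix.conjTranspose_smul, hBh,
          Matrix.conjTranspose_one, Complex.star_def, Complex.conj_ofReal]
      rw [hCh]
      simp only [sub_mul, mul_sub, Matrix.smul_mul, Matrix.mul_smul, one_mul, mul_one,
        smul_smul, sq]
      abel
    rw [Finset.sum_congr rfl fun i _ => hterm i]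
    simp only [Finset.sum_add_distrib, Finset.sum_sub_distrib, ← Finset.sum_mul,
      ← Finset.mul_sum, hqsq, hqB, hq1, mul_one]
    abel
  rw [hkey]
  exact psd_sum _ _ fun i _ => (hTpos _ (hp i)).mul_mul_conjTranspose_same _

lemma L_eq_zero {L Q : Matrix ι ι ℂ} (hL : L.IsHermitian) (hQ : Q.PosSemidef)
    (h : ∀ t : ℝ, ((t : ℂ) • L + ((t : ℂ) ^ 2) • Q).PosSemidef) : L = 0 := by
  apply quad_zero
  intro v
  set z := dotProduct (star v) (L *ᵥ v) with hz
  set w := dotProduct (star v) (Q *ᵥ v) with hw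
  have hw0 : 0 ≤ w := hQ.dotProduct_mulVec_nonneg v
  have hq_re : 0 ≤ w.re := (Complex.le_def.mp hw0).1
  have hq_im : w.im = 0 := ((Complex.le_def.mp hw0).2).symm
  have key : ∀ t : ℝ, 0 ≤ (t : ℂ) * z + (t : ℂ) ^ 2 * w := by
    intro t
    have := (h t).dotProduct_mulVec_nonneg v
    rwa [Matrix.add_mulVec, Matrix.smul_mulVec, Matrix.smul_mulVec,
      dotProduct_add, dotProduct_smul, dotProduct_smul,
      smul_eq_mul, smul_eq_mul] at this
  have him : z.im = 0 := by
    have h1 := (Complex.le_def.mp (key 1)).2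
    simpa [hq_im] using h1.symm
  have hre : z.re = 0 := by
    have hkey : ∀ t : ℝ, 0 ≤ t * z.re + t ^ 2 * w.re := by
      intro t
      have := (Complex.le_def.mp (key t)).1
      simpa [Complex.add_re, Complex.mul_re, Complex.ofReal_re, Complex.ofReal_im,
        ← Complex.ofReal_pow, him, hq_im] using this
    have hd : (0:ℝ) < 2 * w.re + 1 := by linarith
    have h1 := hkey (-z.re / (2 * w.re + 1))
    have h3 : (-z.re / (2 * w.re + 1) * z.re + (-z.re / (2 * w.re + 1)) ^ 2 * w.re)
        * (2 * w.re + 1) ^ 2 = z.re ^ 2 * w.re - z.re ^ 2 * (2 * w.re + 1) := by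
      field_simp
      ring
    have h2 : (0:ℝ) ≤ z.re ^ 2 * w.re - z.re ^ 2 * (2 * w.re + 1) := by
      rw [← h3]; exact mul_nonneg h1 (by positivity)
    have hsq : z.re ^ 2 ≤ 0 := by nlinarith [sq_nonneg z.re]
    exact sq_eq_zero_iff.mp (le_antisymm hsq (sq_nonneg z.re))
  have : z = 0 := Complex.ext hre him
  exact this

include hTpos in
lemma anticomm (hT1 : T 1 = 1) {a : Matrix ι ι ℂ} (ha : a.IsHermitian)
    (ha1 : T a = a) (ha2 : T (a * a) = a * a) :
    ∀ X : Matrix ι ι ℂ, T (a * X + X * a) = a * T X + T X * a := by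
  have herm_case : ∀ s : Matrix ι ι ℂ, s.IsHermitian →
      T (a * s + s * a) = a * T s + T s * a := by
    intro s hs
    set L := T (a * s + s * a) - (a * T s + T s * a) with hLdef
    set Q := T (s * s) - T s * T s with hQdef
    have hQ : Q.PosSemidef := ks T hTpos hT1 hs
    have hLherm : L.IsHermitian := by
      have h1 : (a * s + s * a).IsHermitian := by
        rw [Matrix.IsHermitian, Matrix.conjTranspose_add, Matrix.conjTranspose_mul,
          Matrix.conjTranspose_mul, ha.eq, hs.eq]
        exact add_comm _ _
      have h2 : (T (a * s + s * a)).IsHermitian := herm_map T hTpos h1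
      have h3 : (T s).IsHermitian := herm_map T hTpos hs
      rw [Matrix.IsHermitian, hLdef, Matrix.conjTranspose_sub, h2.eq,
        Matrix.conjTranspose_add, Matrix.conjTranspose_mul, Matrix.conjTranspose_mul,
        ha.eq, h3.eq]
      rw [add_comm (T s * a)]
    have hpos : ∀ t : ℝ, ((t : ℂ) • L + ((t : ℂ) ^ 2) • Q).PosSemidef := by
      intro t
      have hherm : (a + (t : ℂ) • s).IsHermitian := by
        rw [Matrix.IsHermitian, Matrix.conjTranspose_add, Matrix.conjTranspose_smul,
          ha.eq, hs.eq, Complex.star_def, Complex.conj_ofReal]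
      have hks := ks T hTpos hT1 hherm
      have hexp : T ((a + (t : ℂ) • s) * (a + (t : ℂ) • s))
          - T (a + (t : ℂ) • s) * T (a + (t : ℂ) • s)
          = (t : ℂ) • L + ((t : ℂ) ^ 2) • Q := by
        have e1 : (a + (t : ℂ) • s) * (a + (t : ℂ) • s)
            = a * a + (t : ℂ) • (a * s + s * a) + ((t : ℂ) ^ 2) • (s * s) := by
          simp only [add_mul, mul_add, Matrix.smul_mul, Matrix.mul_smul, smul_smul, sq,
            smul_add]
          abel
        have e2 : (a + (t : ℂ) • T s) * (a + (t : ℂ) • T s)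
            = a * a + (t : ℂ) • (a * T s + T s * a) + ((t : ℂ) ^ 2) • (T s * T s) := by
          simp only [add_mul, mul_add, Matrix.smul_mul, Matrix.mul_smul, smul_smul, sq,
            smul_add]
          abel
        rw [e1, hLdef, hQdef]
        simp only [map_add, _root_.map_smul, ha2, ha1, e2]
        module
      rw [← hexp]
      exact hks
    have : L = 0 := L_eq_zero hLherm hQ hpos
    exact sub_eq_zero.mp this
  intro X
  have hdecomp : ∃ (s₁ s₂ : Matrix ι ι ℂ), s₁.IsHermitian ∧ s₂.IsHermitian ∧
      X = s₁ + Complex.I • s₂ := by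
    refine ⟨(1/2 : ℂ) • (X + Xᴴ), -((Complex.I / 2) • (X - Xᴴ)), ?_, ?_, ?_⟩
    · rw [Matrix.IsHermitian, Matrix.conjTranspose_smul, Matrix.conjTranspose_add,
        Matrix.conjTranspose_conjTranspose]
      rw [show star (1/2 : ℂ) = (1/2 : ℂ) by simp, add_comm Xᴴ]
    · rw [Matrix.IsHermitian, Matrix.conjTranspose_neg, Matrix.conjTranspose_smul,
        Matrix.conjTranspose_sub, Matrix.conjTranspose_conjTranspose]
      rw [show star (Complex.I / 2 : ℂ) = -(Complex.I/2) by
        simp [Complex.star_def, neg_div]]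
      rw [neg_smul, neg_neg, smul_sub, smul_sub, neg_sub]
    · have hI2 : Complex.I * (Complex.I / 2) = -(1/2 : ℂ) := by
        rw [← mul_div_assoc, Complex.I_mul_I]; norm_num
      rw [smul_neg, smul_smul, hI2, neg_smul, neg_neg]
      module
  obtain ⟨s₁, s₂, hs₁, hs₂, rfl⟩ := hdecomp
  have e1 := herm_case s₁ hs₁
  have e2 := herm_case s₂ hs₂
  have harg : a * (s₁ + Complex.I • s₂) + (s₁ + Complex.I • s₂) * a
      = (a * s₁ + s₁ * a) + Complex.I • (a * s₂ + s₂ * a) := by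
    simp only [mul_add, add_mul, Matrix.mul_smul, Matrix.smul_mul, smul_add]
    abel
  rw [harg, map_add, _root_.map_smul, e1, e2, map_add, _root_.map_smul]
  simp only [mul_add, add_mul, Matrix.mul_smul, Matrix.smul_mul, smul_add]
  abel

end KS

section Sandwich

variable {ι : Type*} [Fintype ι] [DecidableEq ι]

lemma sandwich (T : Matrix ι ι ℂ →ₗ[ℂ] Matrix ι ι ℂ) {a : Matrix ι ι ℂ}
    (h1 : ∀ X, T (a * X + X * a) = a * T X + T X * a)
    (h2 : ∀ X, T ((a * a) * X + X * (a * a)) = (a * a) * T X + T X * (a * a)) :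
    ∀ X, T (a * X * a) = a * T X * a := by
  intro X
  have e1 := h1 (a * X + X * a)
  rw [h1 X] at e1
  have harg : a * (a * X + X * a) + (a * X + X * a) * a
      = ((a * a) * X + X * (a * a)) + (a * X * a + a * X * a) := by noncomm_ring
  rw [harg, map_add, h2 X, map_add] at e1
  have hrhs : a * (a * T X + T X * a) + (a * T X + T X * a) * a
      = ((a * a) * T X + T X * (a * a)) + (a * T X * a + a * T X * a) := by noncomm_ring
  rw [hrhs] at e1
  have hc := add_left_cancel e1
  have h2' : (2:ℂ) • T (a * X * a) = (2:ℂ) • (a * T X * a) := by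
    rw [two_smul, two_smul]; exact hc
  exact smul_right_injective _ (two_ne_zero) h2'

/-- Hermitian decomposition of a complex matrix. -/
lemma herm_decomp (X : Matrix ι ι ℂ) :
    ∃ s₁ s₂ : Matrix ι ι ℂ, s₁.IsHermitian ∧ s₂.IsHermitian ∧ X = s₁ + Complex.I • s₂ := by
  refine ⟨(1/2 : ℂ) • (X + Xᴴ), -((Complex.I / 2) • (X - Xᴴ)), ?_, ?_, ?_⟩
  · rw [Matrix.IsHermitian, Matrix.conjTranspose_smul, Matrix.conjTranspose_add,
      Matrix.conjTranspose_conjTranspose]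
    rw [show star (1/2 : ℂ) = (1/2 : ℂ) by simp, add_comm Xᴴ]
  · rw [Matrix.IsHermitian, Matrix.conjTranspose_neg, Matrix.conjTranspose_smul,
      Matrix.conjTranspose_sub, Matrix.conjTranspose_conjTranspose]
    rw [show star (Complex.I / 2 : ℂ) = -(Complex.I/2) by
      simp [Complex.star_def, neg_div]]
    rw [neg_smul, neg_neg, smul_sub, smul_sub, neg_sub]
  · have hI2 : Complex.I * (Complex.I / 2) = -(1/2 : ℂ) := by
      rw [← mul_div_assoc, Complex.I_mul_I]; norm_num
    rw [smul_neg, smul_smul, hI2, neg_smul, neg_neg]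
    module

/-- Conjugate transpose of a Kronecker product. -/
lemma kron_conjTranspose {κ₁ κ₂ : Type*} (A : Matrix κ₁ κ₁ ℂ) (B : Matrix κ₂ κ₂ ℂ) :
    (A ⊗ₖ B)ᴴ = Aᴴ ⊗ₖ Bᴴ := by
  ext ⟨i, q⟩ ⟨j, r⟩
  simp [Matrix.conjTranspose_apply, Matrix.kroneckerMap_apply, mul_comm]

lemma kron_sum_right {κ₁ κ₂ κ : Type*} [Fintype κ₁] (A : Matrix κ₁ κ₁ ℂ) (s : Finset κ)
    (f : κ → Matrix κ₂ κ₂ ℂ) :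
    A ⊗ₖ (∑ i ∈ s, f i) = ∑ i ∈ s, A ⊗ₖ f i := by
  classical
  induction s using Finset.induction_on with
  | empty => simp [Matrix.kronecker_zero]
  | insert _ _ hnotmem ih => rw [Finset.sum_insert hnotmem, Finset.sum_insert hnotmem,
      Matrix.kronecker_add, ih]

end Sandwich

/-- Let `H_A`, `H_B` be finite-dimensional Hilbert spaces (operators modelled as
matrices, with the Kronecker product as tensor product) and
`T : B(H_A ⊗ H_B) → B(H_A ⊗ H_B)` a positive linear map.  Then `T (1 ⊗ b) = 1 ⊗ b`
for all `b` iff there exists a unital positive linear map `S : B(H_A) → B(H_A)` with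
`T (a ⊗ b) = S a ⊗ b` for all `a`, `b`. -/
theorem fixes_second_factor_iff_tensor_form {m n : Type*}
    [Fintype m] [Fintype n] [DecidableEq m] [DecidableEq n]
    (T : Matrix (m × n) (m × n) ℂ →ₗ[ℂ] Matrix (m × n) (m × n) ℂ)
    (hTpos : ∀ x : Matrix (m × n) (m × n) ℂ, x.PosSemidef → (T x).PosSemidef) :
    (∀ b : Matrix n n ℂ, T ((1 : Matrix m m ℂ) ⊗ₖ b) = (1 : Matrix m m ℂ) ⊗ₖ b) ↔
      ∃ S : Matrix m m ℂ →ₗ[ℂ] Matrix m m ℂ,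
        S 1 = 1 ∧ (∀ a : Matrix m m ℂ, a.PosSemidef → (S a).PosSemidef) ∧
        ∀ (a : Matrix m m ℂ) (b : Matrix n n ℂ), T (a ⊗ₖ b) = S a ⊗ₖ b := by
  constructor
  · intro hfix
    rcases isEmpty_or_nonempty n with hE | hNE
    · refine ⟨LinearMap.id, rfl, fun a ha => ha, fun a b => ?_⟩
      ext ⟨i, q⟩ ⟨j, r⟩
      exact (hE.false q).elim
    · -- the interesting case
      have hT1 : T 1 = 1 := by
        have := hfix 1
        rwa [Matrix.one_kronecker_one] at this
      set p : n := Classical.arbitrary n with hp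
      set E : Matrix n n ℂ := Matrix.single p p (1:ℂ) with hEdef
      have hEherm : E.IsHermitian := by
        rw [Matrix.IsHermitian]
        ext a b
        simp [hEdef, Matrix.single, Matrix.conjTranspose_apply, and_comm]
      -- kronecker with 1 of a Hermitian matrix is Hermitian
      have hkronherm : ∀ b : Matrix n n ℂ, b.IsHermitian →
          ((1 : Matrix m m ℂ) ⊗ₖ b).IsHermitian := by
        intro b hb
        rw [Matrix.IsHermitian, kron_conjTranspose, Matrix.conjTranspose_one, hb.eq]
      have hkronmul : ∀ b c : Matrix n n ℂ,
          ((1 : Matrix m m ℂ) ⊗ₖ b) * ((1 : Matrix m m ℂ) ⊗ₖ c)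
            = (1 : Matrix m m ℂ) ⊗ₖ (b * c) := by
        intro b c
        rw [← Matrix.mul_kronecker_mul, one_mul]
      -- the anticommutator identity for fixed Hermitian elements 1 ⊗ b
      have hanti : ∀ b : Matrix n n ℂ, b.IsHermitian →
          ∀ X, T (((1:Matrix m m ℂ) ⊗ₖ b) * X + X * ((1:Matrix m m ℂ) ⊗ₖ b))
            = ((1:Matrix m m ℂ) ⊗ₖ b) * T X + T X * ((1:Matrix m m ℂ) ⊗ₖ b) := by
        intro b hb
        refine anticomm T hTpos hT1 (hkronherm b hb) (hfix b) ?_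
        rw [hkronmul]; exact hfix _
      -- the sandwich identity for fixed Hermitian elements
      have hgood : ∀ b : Matrix n n ℂ, b.IsHermitian →
          ∀ X, T (((1:Matrix m m ℂ) ⊗ₖ b) * X * ((1:Matrix m m ℂ) ⊗ₖ b))
            = ((1:Matrix m m ℂ) ⊗ₖ b) * T X * ((1:Matrix m m ℂ) ⊗ₖ b) := by
        intro b hb
        refine sandwich T (hanti b hb) ?_
        rw [hkronmul]
        have hbb : (b * b).IsHermitian := by
          rw [Matrix.IsHermitian, Matrix.conjTranspose_mul, hb.eq]
        exact hanti (b * b) hbb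
      -- polarized version for two Hermitian elements
      have hgood2 : ∀ b c : Matrix n n ℂ, b.IsHermitian → c.IsHermitian →
          ∀ X, T (((1:Matrix m m ℂ) ⊗ₖ b) * X * ((1:Matrix m m ℂ) ⊗ₖ c)
              + ((1:Matrix m m ℂ) ⊗ₖ c) * X * ((1:Matrix m m ℂ) ⊗ₖ b))
            = ((1:Matrix m m ℂ) ⊗ₖ b) * T X * ((1:Matrix m m ℂ) ⊗ₖ c)
              + ((1:Matrix m m ℂ) ⊗ₖ c) * T X * ((1:Matrix m m ℂ) ⊗ₖ b) := by
        intro b c hb hc X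
        have hbc : (b + c).IsHermitian := hb.add hc
        have h := hgood (b + c) hbc X
        rw [Matrix.kronecker_add] at h
        set u := (1:Matrix m m ℂ) ⊗ₖ b
        set v := (1:Matrix m m ℂ) ⊗ₖ c
        have harg : (u + v) * X * (u + v)
            = (u * X * u + v * X * v) + (u * X * v + v * X * u) := by noncomm_ring
        have hrhs : (u + v) * T X * (u + v)
            = (u * T X * u + v * T X * v) + (u * T X * v + v * T X * u) := by noncomm_ring
        rw [harg, map_add, map_add, hgood b hb X, hgood c hc X, hrhs] at h
        exact add_left_cancel h
      -- fully polarized version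
      have hgoodgen : ∀ c d : Matrix n n ℂ,
          ∀ X, T (((1:Matrix m m ℂ) ⊗ₖ c) * X * ((1:Matrix m m ℂ) ⊗ₖ d)
              + ((1:Matrix m m ℂ) ⊗ₖ d) * X * ((1:Matrix m m ℂ) ⊗ₖ c))
            = ((1:Matrix m m ℂ) ⊗ₖ c) * T X * ((1:Matrix m m ℂ) ⊗ₖ d)
              + ((1:Matrix m m ℂ) ⊗ₖ d) * T X * ((1:Matrix m m ℂ) ⊗ₖ c) := by
        intro c d X
        obtain ⟨c₁, c₂, hc₁, hc₂, rfl⟩ := herm_decomp c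
        obtain ⟨d₁, d₂, hd₁, hd₂, rfl⟩ := herm_decomp d
        rw [Matrix.kronecker_add, Matrix.kronecker_add, Matrix.kronecker_smul,
          Matrix.kronecker_smul]
        set u₁ := (1:Matrix m m ℂ) ⊗ₖ c₁
        set u₂ := (1:Matrix m m ℂ) ⊗ₖ c₂
        set v₁ := (1:Matrix m m ℂ) ⊗ₖ d₁
        set v₂ := (1:Matrix m m ℂ) ⊗ₖ d₂
        have harg : ∀ Y : Matrix (m × n) (m × n) ℂ,
            (u₁ + Complex.I • u₂) * Y * (v₁ + Complex.I • v₂)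
              + (v₁ + Complex.I • v₂) * Y * (u₁ + Complex.I • u₂)
            = (u₁ * Y * v₁ + v₁ * Y * u₁) + Complex.I • (u₁ * Y * v₂ + v₂ * Y * u₁)
              + Complex.I • (u₂ * Y * v₁ + v₁ * Y * u₂)
              + (Complex.I * Complex.I) • (u₂ * Y * v₂ + v₂ * Y * u₂) := by
          intro Y
          simp only [add_mul, mul_add, Matrix.smul_mul, Matrix.mul_smul, smul_add, smul_smul]
          abel
        rw [harg X, map_add, map_add, map_add, _root_.map_smul, _root_.map_smul,
          _root_.map_smul, hgood2 c₁ d₁ hc₁ hd₁ X, hgood2 c₁ d₂ hc₁ hd₂ X,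
          hgood2 c₂ d₁ hc₂ hd₁ X, hgood2 c₂ d₂ hc₂ hd₂ X, harg (T X)]
      -- definition of S
      set S : Matrix m m ℂ →ₗ[ℂ] Matrix m m ℂ :=
        { toFun := fun a => Matrix.of fun i j => T (a ⊗ₖ E) (i, p) (j, p)
          map_add' := by
            intro a b
            ext i j
            simp [Matrix.add_kronecker, map_add, Matrix.add_apply]
          map_smul' := by
            intro c a
            ext i j
            simp [Matrix.smul_kronecker, _root_.map_smul, Matrix.smul_apply] } with hSdef
      -- corner structure
      have corner_form : ∀ Y : Matrix (m × n) (m × n) ℂ,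
          ((1:Matrix m m ℂ) ⊗ₖ E) * Y * ((1:Matrix m m ℂ) ⊗ₖ E)
            = (Matrix.of fun i j => Y (i, p) (j, p)) ⊗ₖ E := by
        intro Y
        ext ⟨i, q⟩ ⟨j, r⟩
        rw [Matrix.mul_apply, Matrix.kroneckerMap_apply]
        simp only [Matrix.mul_apply, Matrix.kroneckerMap_apply, Matrix.one_apply,
          hEdef, Matrix.single, Matrix.of_apply, Fintype.sum_prod_type]
        by_cases hq : q = p <;> by_cases hr : r = p
        · subst hq; subst hr
          simp [Finset.sum_ite_eq, Finset.sum_ite_eq', mul_ite, ite_mul]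
        · subst hq
          simp [Finset.sum_ite_eq, Finset.sum_ite_eq', mul_ite, ite_mul, hr, Ne.symm hr]
        · subst hr
          simp [Finset.sum_ite_eq, Finset.sum_ite_eq', mul_ite, ite_mul, hq, Ne.symm hq]
        · simp [Finset.sum_ite_eq, Finset.sum_ite_eq', mul_ite, ite_mul, hq, hr,
            Ne.symm hq, Ne.symm hr]
      -- T (a ⊗ E) = S a ⊗ E
      have hSE : ∀ a : Matrix m m ℂ, T (a ⊗ₖ E) = S a ⊗ₖ E := by
        intro a
        have h1 : ((1:Matrix m m ℂ) ⊗ₖ E) * (a ⊗ₖ E) * ((1:Matrix m m ℂ) ⊗ₖ E)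
            = a ⊗ₖ E := by
          rw [← Matrix.mul_kronecker_mul, ← Matrix.mul_kronecker_mul, one_mul, mul_one]
          congr 1
          rw [hEdef, Matrix.single_mul_single_same, Matrix.single_mul_single_same]
          norm_num
        have h2 := hgood E hEherm (a ⊗ₖ E)
        rw [h1, corner_form] at h2
        exact h2
      -- main formula on matrix units
      have hmain : ∀ (a : Matrix m m ℂ) (k l : n),
          T (a ⊗ₖ Matrix.single k l (1:ℂ)) = S a ⊗ₖ Matrix.single k l 1 := by
        intro a k l
        have h := hgoodgen (Matrix.single k p 1) (Matrix.single p l 1) (a ⊗ₖ E)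
        rw [hSE a] at h
        have e1 : ∀ Z : Matrix m m ℂ,
            ((1:Matrix m m ℂ) ⊗ₖ Matrix.single k p 1) * (Z ⊗ₖ E)
              * ((1:Matrix m m ℂ) ⊗ₖ Matrix.single p l 1)
            = Z ⊗ₖ Matrix.single k l 1 := by
          intro Z
          rw [← Matrix.mul_kronecker_mul, ← Matrix.mul_kronecker_mul, one_mul, mul_one]
          congr 1
          rw [hEdef, Matrix.single_mul_single_same, Matrix.single_mul_single_same]
          norm_num
        have e2 : ∀ Z : Matrix m m ℂ,
            ((1:Matrix m m ℂ) ⊗ₖ Matrix.single p l 1) * (Z ⊗ₖ E)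
              * ((1:Matrix m m ℂ) ⊗ₖ Matrix.single k p 1)
            = if l = p ∧ k = p then Z ⊗ₖ E else 0 := by
          intro Z
          rw [← Matrix.mul_kronecker_mul, ← Matrix.mul_kronecker_mul, one_mul, mul_one]
          by_cases hl : l = p
          · subst hl
            by_cases hk : k = p
            · subst hk
              rw [if_pos (⟨rfl, rfl⟩ : p = p ∧ p = p)]
              congr 1
              rw [hEdef, Matrix.single_mul_single_same, Matrix.single_mul_single_same]
              norm_num
            · rw [if_neg (by tauto), hEdef, Matrix.single_mul_single_same,
                Matrix.single_mul_single_of_ne (h := Ne.symm hk),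
                Matrix.kronecker_zero]
          · rw [if_neg (by tauto), hEdef, Matrix.single_mul_single_of_ne (h := hl),
              zero_mul, Matrix.kronecker_zero]
        rw [e1 a, e2 a, e1 (S a), e2 (S a)] at h
        by_cases hlk : l = p ∧ k = p
        · obtain ⟨rfl, rfl⟩ := hlk
          rw [← hEdef]
          exact hSE a
        · rw [if_neg hlk, if_neg hlk, add_zero, add_zero] at h
          exact h
      -- S is unital
      have hS1 : S 1 = 1 := by
        have h := hSE 1
        rw [hfix E] at h
        ext i j
        have := congrArg (fun M => M (i, p) (j, p)) h
        simp only [Matrix.kroneckerMap_apply] at this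
        have hEpp : E p p = 1 := by simp [hEdef, Matrix.single]
        rw [hEpp, mul_one, mul_one] at this
        exact this.symm
      -- S is positive
      have hSpos : ∀ a : Matrix m m ℂ, a.PosSemidef → (S a).PosSemidef := by
        intro a ha
        obtain ⟨B, hB⟩ : ∃ B : Matrix m m ℂ, a = Bᴴ * B := by
            open scoped MatrixOrder in
            exact CStarAlgebra.nonneg_iff_eq_star_mul_self.mp (Matrix.nonneg_iff_posSemidef.mpr ha)
        have hkron : (a ⊗ₖ E).PosSemidef := by
          have : a ⊗ₖ E = (B ⊗ₖ E)ᴴ * (B ⊗ₖ E) := by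
            rw [kron_conjTranspose, hEherm.eq, ← Matrix.mul_kronecker_mul, ← hB]
            congr 1
            rw [hEdef, Matrix.single_mul_single_same]
            norm_num
          rw [this]
          exact Matrix.posSemidef_conjTranspose_mul_self _
        have hTpsd : (S a ⊗ₖ E).PosSemidef := by
          rw [← hSE a]
          exact hTpos _ hkron
        have := hTpsd.submatrix (fun i : m => (i, p))
        have heq : (S a ⊗ₖ E).submatrix (fun i : m => (i, p)) (fun i : m => (i, p)) = S a := by
          ext i j
          simp [Matrix.submatrix_apply, Matrix.kroneckerMap_apply, hEdef,
            Matrix.single]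
        rwa [heq] at this
      refine ⟨S, hS1, hSpos, fun a b => ?_⟩
      have hb : b = ∑ x : n × n,
          Matrix.single x.1 x.2 (b x.1 x.2) := by
        rw [Fintype.sum_prod_type]
        exact Matrix.matrix_eq_sum_single b
      calc T (a ⊗ₖ b) = T (a ⊗ₖ ∑ x : n × n,
            Matrix.single x.1 x.2 (b x.1 x.2)) := by rw [← hb]
        _ = ∑ x : n × n,
            T (a ⊗ₖ Matrix.single x.1 x.2 (b x.1 x.2)) := by
            rw [kron_sum_right, map_sum]
        _ = ∑ x : n × n,
            S a ⊗ₖ Matrix.single x.1 x.2 (b x.1 x.2) := by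
            refine Finset.sum_congr rfl fun x _ => ?_
            have : Matrix.single x.1 x.2 (b x.1 x.2)
                = (b x.1 x.2) • Matrix.single x.1 x.2 (1:ℂ) := by
              rw [Matrix.smul_single, smul_eq_mul, mul_one]
            rw [this, Matrix.kronecker_smul, _root_.map_smul, hmain, Matrix.kronecker_smul]
        _ = S a ⊗ₖ b := by rw [← kron_sum_right, ← hb]
  · rintro ⟨S, hS1, -, hST⟩ b
    rw [hST, hS1]
end

section
/- Every *-automorphism ψ of B(H), for H a finite-dimensional Hilbert space, is inner: there exists a unitary u ∈ B(H) with ψ(a) = u a u* for all a ∈ B(H). -/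
open scoped InnerProductSpace

section Aux

variable {H : Type*} [NormedAddCommGroup H] [InnerProductSpace ℂ H] [FiniteDimensional ℂ H]

/-- Rank one operator `v ↦ ⟪e, v⟫ • x`. -/
noncomputable def rkOne (e x : H) : H →L[ℂ] H := (innerSL ℂ e).smulRight x

lemma rkOne_apply (e x v : H) : rkOne e x v = ⟪e, v⟫_ℂ • x := rfl

lemma comp_rkOne (a : H →L[ℂ] H) (e x : H) : a * rkOne e x = rkOne e (a x) := by
  ext v
  simp [rkOne_apply, ContinuousLinearMap.mul_apply]

lemma rkOne_add (e x y : H) : rkOne e (x + y) = rkOne e x + rkOne e y := by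
  ext v; simp [rkOne_apply, smul_add]

lemma rkOne_smul (e : H) (c : ℂ) (x : H) : rkOne e (c • x) = c • rkOne e x := by
  ext v
  simp only [rkOne_apply, ContinuousLinearMap.smul_apply]
  rw [smul_comm]

lemma star_rkOne (e x : H) : star (rkOne e x) = rkOne x e := by
  rw [ContinuousLinearMap.star_eq_adjoint]
  ext v
  apply ext_inner_left ℂ
  intro z
  rw [ContinuousLinearMap.adjoint_inner_right]
  simp [rkOne_apply, inner_smul_left, inner_smul_right]
  ring

lemma star_rkOne_mul (e x y : H) :
    star (rkOne e x) * rkOne e y = ⟪x, y⟫_ℂ • rkOne e e := by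
  rw [star_rkOne]
  ext v
  simp [rkOne_apply, ContinuousLinearMap.mul_apply, inner_smul_right, smul_smul]
  ring_nf

end Aux

/-- Every *-automorphism `ψ` of `B(H)`, for `H` a finite-dimensional (complex) Hilbert
space, is inner: there is a unitary `u ∈ B(H)` with `ψ a = u * a * u*` for all `a`. -/
theorem starAlgAut_inner (H : Type*) [NormedAddCommGroup H] [InnerProductSpace ℂ H]
    [FiniteDimensional ℂ H]
    (ψ : (H →L[ℂ] H) ≃⋆ₐ[ℂ] (H →L[ℂ] H)) :
    ∃ u : H →L[ℂ] H, u ∈ unitary (H →L[ℂ] H) ∧ ∀ a : H →L[ℂ] H, ψ a = u * a * star u := by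
  rcases subsingleton_or_nontrivial H with hH | hH
  · refine ⟨1, Submonoid.one_mem _, fun a => ?_⟩
    exact Subsingleton.elim _ _
  -- pick a unit vector e
  obtain ⟨e0, he0⟩ := exists_ne (0 : H)
  set e : H := ‖e0‖⁻¹ • e0 with he_def
  have he : ‖e‖ = 1 := by
    simp [he_def, norm_smul, inv_mul_cancel₀ (norm_ne_zero_iff.mpr he0)]
  have hee : ⟪e, e⟫_ℂ = 1 := by
    rw [inner_self_eq_norm_sq_to_K, he]; norm_num
  -- the projection p = rkOne e e and its image q
  set p : H →L[ℂ] H := rkOne e e with hp_def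
  set q : H →L[ℂ] H := ψ p with hq_def
  have hpp : p * p = p := by
    rw [hp_def, comp_rkOne, rkOne_apply, hee, one_smul]
  have hqq : q * q = q := by
    rw [hq_def, ← map_mul, hpp]
  have hpne : p ≠ 0 := by
    intro h
    have := congrArg (fun A : H →L[ℂ] H => A e) h
    simp [hp_def, rkOne_apply, hee] at this
    exact he0 (by simpa [he_def, this] using congrArg (fun x : H => ‖x‖) this) |>.elim
  have hqne : q ≠ 0 := by
    intro h
    exact hpne (ψ.injective (by simpa [hq_def] using h.trans (map_zero ψ).symm))
  -- pick a unit vector f fixed by q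
  obtain ⟨y, hy⟩ : ∃ y, q y ≠ 0 := by
    by_contra h
    push_neg at h
    exact hqne (ContinuousLinearMap.ext fun y => by simpa using h y)
  set f : H := (‖q y‖⁻¹ : ℂ) • q y with hf_def
  have hf : ‖f‖ = 1 := by
    simp [hf_def, norm_smul, inv_mul_cancel₀ (norm_ne_zero_iff.mpr hy)]
  have hqf : q f = f := by
    have : q (q y) = q y := by
      have := congrArg (fun A : H →L[ℂ] H => A y) hqq
      simpa [ContinuousLinearMap.mul_apply] using this
    simp [hf_def, this]
  have hff : ⟪f, f⟫_ℂ = 1 := by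
    rw [inner_self_eq_norm_sq_to_K, hf]; norm_num
  -- define u
  set u₀ : H →ₗ[ℂ] H :=
    { toFun := fun x => ψ (rkOne e x) f
      map_add' := fun x y => by
        show ψ (rkOne e (x + y)) f = ψ (rkOne e x) f + ψ (rkOne e y) f
        rw [rkOne_add, map_add]; rfl
      map_smul' := fun c x => by
        show ψ (rkOne e (c • x)) f = c • ψ (rkOne e x) f
        rw [rkOne_smul, map_smul ψ]
        rfl } with hu₀_def
  set u : H →L[ℂ] H := u₀.toContinuousLinearMap with hu_def
  have hu_apply : ∀ x : H, u x = ψ (rkOne e x) f := fun x => rfl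
  -- u preserves the inner product
  have hinner : ∀ x z : H, ⟪u x, u z⟫_ℂ = ⟪x, z⟫_ℂ := by
    intro x z
    rw [hu_apply, hu_apply]
    have h1 : ⟪ψ (rkOne e x) f, ψ (rkOne e z) f⟫_ℂ
        = ⟪f, (star (ψ (rkOne e x)) * ψ (rkOne e z)) f⟫_ℂ := by
      rw [ContinuousLinearMap.mul_apply, ContinuousLinearMap.star_eq_adjoint,
        ContinuousLinearMap.adjoint_inner_right]
    rw [h1, ← map_star ψ, ← map_mul ψ, star_rkOne_mul, map_smul ψ]
    rw [show ((⟪x, z⟫_ℂ • ψ (rkOne e e)) f) = ⟪x, z⟫_ℂ • (ψ (rkOne e e) f) from rfl]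
    rw [← hp_def, ← hq_def, hqf, inner_smul_right, hff, mul_one]
  -- star u * u = 1
  have h1 : star u * u = 1 := by
    ext x
    apply ext_inner_left ℂ
    intro z
    rw [ContinuousLinearMap.mul_apply, ContinuousLinearMap.star_eq_adjoint,
      ContinuousLinearMap.adjoint_inner_right]
    simpa using hinner z x
  -- u * star u = 1 by finite-dimensionality
  have h1' : ContinuousLinearMap.toLinearMap (star u) * ContinuousLinearMap.toLinearMap u
      = 1 := by
    ext x
    have := congrArg (fun A : H →L[ℂ] H => A x) h1
    simpa using this
  have h2' : ContinuousLinearMap.toLinearMap u * ContinuousLinearMap.toLinearMap (star u)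
      = 1 :=
    mul_eq_one_comm.mp h1'
  have h2 : u * star u = 1 := by
    ext x
    have := LinearMap.congr_fun h2' x
    simpa using this
  -- commutation relation
  have hcomm : ∀ a : H →L[ℂ] H, ψ a * u = u * a := by
    intro a
    ext x
    rw [ContinuousLinearMap.mul_apply, ContinuousLinearMap.mul_apply,
      hu_apply, hu_apply, ← ContinuousLinearMap.mul_apply (ψ a), ← map_mul,
      comp_rkOne]
  refine ⟨u, ⟨h1, h2⟩, fun a => ?_⟩
  calc ψ a = ψ a * (u * star u) := by rw [h2, mul_one]
    _ = (ψ a * u) * star u := by rw [mul_assoc]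
    _ = u * a * star u := by rw [hcomm]
end

section
/- Let H_A, H_B, H_C be finite-dimensional Hilbert spaces, Θ = (id_A ⊗ ψ_BC) ∘ (χ_AB ⊗ id_C) with ψ_BC, χ_AB *-automorphisms as above, σ a state on B(H_B), and define the operation Γ on states of B(H_A ⊗ H_C) by Γ(ω)(c) := (ω ⊗ σ)(Θ(c ⊗ 1_B)) for c ∈ B(H_A ⊗ H_C), where the tensor factors are permuted appropriately. Then for any state ω on B(H_A ⊗ H_C), any unital CP map T_A : B(H_A) → B(H_A), and any c ∈ 1_A ⊗ B(H_C), Γ(ω ∘ (T_A ⊗ id_C))(c) = Γ(ω)(c). That is, a prior local operation on system A does not affect expectation values of C-observables after applying Γ. -/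
open Matrix Kronecker ComplexOrder

variable {a b c : Type*} [Fintype a] [Fintype b] [Fintype c]
  [DecidableEq a] [DecidableEq b] [DecidableEq c]

/-- Reassociation `B((H_A ⊗ H_B) ⊗ H_C) ≅ B(H_A ⊗ (H_B ⊗ H_C))` of matrix indices. -/
def assocM (M : Matrix ((a × b) × c) ((a × b) × c) ℂ) :
    Matrix (a × b × c) (a × b × c) ℂ :=
  Matrix.reindex (Equiv.prodAssoc a b c) (Equiv.prodAssoc a b c) M

/-- The embedding `B(H_A ⊗ H_C) → B(H_A ⊗ H_B ⊗ H_C)`, `x ↦ x ⊗ 1_B` with the tensor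
factors permuted appropriately. -/
def embedAC (M : Matrix (a × c) (a × c) ℂ) : Matrix (a × b × c) (a × b × c) ℂ :=
  fun p q => if p.2.1 = q.2.1 then M (p.1, p.2.2) (q.1, q.2.2) else 0

/-- The ampliation `T ⊗ id_γ` of a map `T : B(H_α) → B(H_α)`. -/
def tensorId {α γ : Type*} [Fintype α] [Fintype γ]
    (T : Matrix α α ℂ → Matrix α α ℂ)
    (M : Matrix (α × γ) (α × γ) ℂ) : Matrix (α × γ) (α × γ) ℂ :=
  fun p q => T (fun i j => M (i, p.2) (j, q.2)) p.1 q.1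

/-- The product functional `ω ⊗ σ` applied to an operator on `H_A ⊗ H_B ⊗ H_C`, where
`ω` is a functional on `B(H_A ⊗ H_C)` and `σ` one on `B(H_B)`, determined by its values
on matrix units. -/
noncomputable def pairDual (ω : Matrix (a × c) (a × c) ℂ → ℂ)
    (σ : Matrix b b ℂ → ℂ) (M : Matrix (a × b × c) (a × b × c) ℂ) : ℂ :=
  ∑ i : a, ∑ j : a, ∑ k : b, ∑ l : b, ∑ s : c, ∑ t : c,
    M (i, (k, s)) (j, (l, t)) * ω (Matrix.single (i, s) (j, t) 1) *
      σ (Matrix.single k l 1)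

-- aux lemmas
lemma sum_stdBasis_diag_one {α : Type*} [Fintype α] [DecidableEq α] :
    (∑ i : α, Matrix.single i i (1:ℂ)) = 1 := by
  ext i j
  simp only [Matrix.sum_apply, Matrix.single, Matrix.of_apply, Matrix.one_apply]
  by_cases h : i = j <;> simp [h, Finset.sum_ite_eq]

lemma sum5_comm {a b c : Type*} [Fintype a] [Fintype b] [Fintype c]
    (f : a → b → b → c → c → ℂ) :
    (∑ i : a, ∑ k : b, ∑ l : b, ∑ s : c, ∑ t : c, f i k l s t)
    = ∑ k : b, ∑ l : b, ∑ s : c, ∑ t : c, ∑ i : a, f i k l s t := by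
  rw [Finset.sum_comm]
  refine Finset.sum_congr rfl fun k _ => ?_
  rw [Finset.sum_comm]
  refine Finset.sum_congr rfl fun l _ => ?_
  rw [Finset.sum_comm]
  refine Finset.sum_congr rfl fun s _ => ?_
  rw [Finset.sum_comm]


/-- Let `Θ = (id_A ⊗ ψ_BC) ∘ (χ_AB ⊗ id_C)` with `ψ_BC`, `χ_AB` *-automorphisms,
`σ` a state on `B(H_B)`, and define the operation `Γ` on states of `B(H_A ⊗ H_C)` by
`Γ(ω)(x) := (ω ⊗ σ)(Θ (x ⊗ 1_B))` (tensor factors permuted appropriately).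
Then for any state `ω` on `B(H_A ⊗ H_C)`, any unital completely positive map
`T_A : B(H_A) → B(H_A)`, and any `x = 1_A ⊗ x₀ ∈ 1_A ⊗ B(H_C)`,
`Γ(ω ∘ (T_A ⊗ id_C))(x) = Γ(ω)(x)`: a prior local operation on system `A` does not
affect expectation values of `C`-observables after applying `Γ`. -/
theorem prior_local_operation_no_effect
    (ψBC : Matrix (b × c) (b × c) ℂ ≃⋆ₐ[ℂ] Matrix (b × c) (b × c) ℂ)
    (χAB : Matrix (a × b) (a × b) ℂ ≃⋆ₐ[ℂ] Matrix (a × b) (a × b) ℂ)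
    (Ψ Χ Θ : Matrix (a × b × c) (a × b × c) ℂ ≃⋆ₐ[ℂ] Matrix (a × b × c) (a × b × c) ℂ)
    (hΨ : ∀ (M : Matrix a a ℂ) (N : Matrix (b × c) (b × c) ℂ),
      Ψ (M ⊗ₖ N) = M ⊗ₖ ψBC N)
    (hΧ : ∀ (M : Matrix (a × b) (a × b) ℂ) (N : Matrix c c ℂ),
      Χ (assocM (M ⊗ₖ N)) = assocM (χAB M ⊗ₖ N))
    (hΘ : ∀ M, Θ M = Ψ (Χ M))
    (σ : Module.Dual ℂ (Matrix b b ℂ))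
    (hσpos : ∀ x : Matrix b b ℂ, 0 ≤ σ (xᴴ * x)) (hσ1 : σ 1 = 1)
    (ω : Module.Dual ℂ (Matrix (a × c) (a × c) ℂ))
    (hωpos : ∀ x : Matrix (a × c) (a × c) ℂ, 0 ≤ ω (xᴴ * x)) (hω1 : ω 1 = 1)
    (TA : Matrix a a ℂ →ₗ[ℂ] Matrix a a ℂ) (hTA1 : TA 1 = 1)
    (hTAcp : ∀ (k : ℕ) (M : Matrix (a × Fin k) (a × Fin k) ℂ), M.PosSemidef →
      (tensorId (fun x => TA x) M).PosSemidef)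
    (x₀ : Matrix c c ℂ) :
    pairDual (fun M => ω (tensorId (fun x => TA x) M)) (fun N => σ N)
        (Θ (embedAC ((1 : Matrix a a ℂ) ⊗ₖ x₀))) =
      pairDual (fun M => ω M) (fun N => σ N)
        (Θ (embedAC ((1 : Matrix a a ℂ) ⊗ₖ x₀))) := by
  -- Step 1: compute Θ of the embedded observable
  have h1 : (embedAC ((1 : Matrix a a ℂ) ⊗ₖ x₀) : Matrix (a × b × c) (a × b × c) ℂ) =
      assocM ((1 : Matrix (a × b) (a × b) ℂ) ⊗ₖ x₀) := by
    ext ⟨i, k, s⟩ ⟨j, l, t⟩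
    simp only [embedAC, assocM, Matrix.reindex_apply, Matrix.submatrix_apply,
      Equiv.prodAssoc_symm_apply, kroneckerMap_apply, Matrix.one_apply, Prod.mk.injEq]
    by_cases h : k = l <;> by_cases h' : i = j <;> simp [h, h']
  have h2 : (assocM ((1 : Matrix (a × b) (a × b) ℂ) ⊗ₖ x₀) : Matrix (a × b × c) (a × b × c) ℂ) =
      (1 : Matrix a a ℂ) ⊗ₖ ((1 : Matrix b b ℂ) ⊗ₖ x₀) := by
    ext ⟨i, k, s⟩ ⟨j, l, t⟩
    simp only [assocM, Matrix.reindex_apply, Matrix.submatrix_apply,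
      Equiv.prodAssoc_symm_apply, kroneckerMap_apply, Matrix.one_apply, Prod.mk.injEq]
    by_cases h : k = l <;> by_cases h' : i = j <;> simp [h, h', ite_and]
  have hΘval : Θ (embedAC ((1 : Matrix a a ℂ) ⊗ₖ x₀)) =
      (1 : Matrix a a ℂ) ⊗ₖ ψBC ((1 : Matrix b b ℂ) ⊗ₖ x₀) := by
    have h3 := hΧ 1 x₀
    rw [_root_.map_one χAB] at h3
    rw [hΘ, h1, h3, h2, hΨ]
  rw [hΘval]
  set N := ψBC ((1 : Matrix b b ℂ) ⊗ₖ x₀) with hN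
  -- Step 2: the key identity: summed over A, tensorId TA acts as identity on
  -- matrix units of the form E_{(i,s),(i,t)}
  have key : ∀ s t : c,
      (∑ i : a, ω (tensorId (fun x => TA x) (Matrix.single ((i, s) : a × c) (i, t) 1)))
      = ∑ i : a, ω (Matrix.single ((i, s) : a × c) (i, t) 1) := by
    intro s t
    have hsum : (∑ i : a, tensorId (fun x => TA x) (Matrix.single ((i, s) : a × c) (i, t) 1))
        = ∑ i : a, Matrix.single ((i, s) : a × c) (i, t) 1 := by
      ext ⟨p1, p2⟩ ⟨q1, q2⟩
      simp only [Matrix.sum_apply, tensorId]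
      by_cases h : p2 = s ∧ q2 = t
      · obtain ⟨rfl, rfl⟩ := h
        have hinner : ∀ i : a, (fun i' j' => Matrix.single ((i, p2) : a × c) (i, q2) (1:ℂ) (i', p2) (j', q2))
            = Matrix.single i i 1 := by
          intro i; funext i' j'
          simp [Matrix.single]
        simp_rw [hinner]
        have : (∑ i : a, TA (Matrix.single i i 1) p1 q1)
            = TA (∑ i : a, Matrix.single i i 1) p1 q1 := by
          rw [map_sum, Matrix.sum_apply]
        rw [this, sum_stdBasis_diag_one, hTA1]
        have hrhs : ∀ i : a, Matrix.single ((i, p2) : a × c) (i, q2) (1:ℂ) (p1, p2) (q1, q2)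
            = if i = p1 ∧ i = q1 then 1 else 0 := by
          intro i
          simp [Matrix.single, Prod.ext_iff]
        simp_rw [hrhs]
        by_cases h : p1 = q1
        · subst h; simp [Matrix.one_apply]
        · rw [Matrix.one_apply_ne h, Finset.sum_eq_zero]
          intro i _
          rw [if_neg]
          rintro ⟨rfl, rfl⟩
          exact h rfl
      · have hinner : ∀ i : a, (fun i' j' => Matrix.single ((i, s) : a × c) (i, t) (1:ℂ) (i', p2) (j', q2))
            = (0 : Matrix a a ℂ) := by
          intro i; funext i' j'
          simp only [Matrix.single, Matrix.of_apply, Prod.mk.injEq, Matrix.zero_apply]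
          rw [if_neg]
          rintro ⟨⟨-, h1⟩, ⟨-, h2⟩⟩
          exact h ⟨h1.symm, h2.symm⟩
        simp_rw [hinner, map_zero]
        simp only [Matrix.zero_apply, Finset.sum_const_zero]
        symm
        refine Finset.sum_eq_zero fun i _ => ?_
        simp only [Matrix.single, Matrix.of_apply, Prod.mk.injEq]
        rw [if_neg]
        rintro ⟨⟨-, h1⟩, ⟨-, h2⟩⟩
        exact h ⟨h1.symm, h2.symm⟩
    calc (∑ i : a, ω (tensorId (fun x => TA x) (Matrix.single ((i, s) : a × c) (i, t) 1)))
        = ω (∑ i : a, tensorId (fun x => TA x) (Matrix.single ((i, s) : a × c) (i, t) 1)) :=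
          (map_sum ω _ _).symm
      _ = ω (∑ i : a, Matrix.single ((i, s) : a × c) (i, t) 1) := by rw [hsum]
      _ = ∑ i : a, ω (Matrix.single ((i, s) : a × c) (i, t) 1) := map_sum ω _ _
  -- Step 3: rearrange the pairDual sums
  have expand : ∀ w : Matrix (a × c) (a × c) ℂ → ℂ,
      pairDual w (fun N => σ N) ((1 : Matrix a a ℂ) ⊗ₖ N)
      = ∑ k : b, ∑ l : b, ∑ s : c, ∑ t : c,
          (N (k, s) (l, t) * σ (Matrix.single k l 1)) *
            ∑ i : a, w (Matrix.single ((i, s) : a × c) (i, t) 1) := by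
    intro w
    unfold pairDual
    simp only [kroneckerMap_apply, Matrix.one_apply, ite_mul, one_mul, zero_mul,
      Finset.sum_ite_irrel, Finset.sum_const_zero, Finset.sum_ite_eq, Finset.mem_univ,
      if_true]
    rw [sum5_comm (fun i k l s t => N (k, s) (l, t) *
      w (Matrix.single ((i, s) : a × c) (i, t) 1) * σ (Matrix.single k l 1))]
    refine Finset.sum_congr rfl fun k _ => Finset.sum_congr rfl fun l _ =>
      Finset.sum_congr rfl fun s _ => Finset.sum_congr rfl fun t _ => ?_
    rw [Finset.mul_sum]
    refine Finset.sum_congr rfl fun i _ => ?_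
    ring
  rw [expand, expand]
  refine Finset.sum_congr rfl fun k _ => Finset.sum_congr rfl fun l _ =>
    Finset.sum_congr rfl fun s _ => Finset.sum_congr rfl fun t _ => ?_
  rw [key s t]
end
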